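/- Let f : [0,∞) → [0,1] be continuous and let n = (n_A, n_B) : [0,∞) → ℝ² be differentiable with n′(t) = G(n(t); f(t)) for all t ≥ 0. If n_A(0) ≥ 0, n_B(0) ≥ 0 and n_A(0) + n_B(0) ≤ 1, then for all t ≥ 0 one has n_A(t) ≥ 0, n_B(t) ≥ 0 and n_A(t) + n_B(t) ≤ 1; i.e., the simplex of admissible opinion concentrations is forward invariant under the mean-field Naming Game dynamics. -/

import Mathlib

/-- The two-word Listener-Only Naming Game mean-field vector field at local
influence probability `f`:
`G (nA, nB; f) = (f − nA − f·nB, (1−f) − (1−f)·nA − nB)`. -/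
def NG_G (f nA nB : ℝ) : ℝ × ℝ :=
  (f - nA - f * nB, (1 - f) - (1 - f) * nA - nB)

/-- Forward invariance of the simplex of admissible opinion concentrations:
if `f : [0,∞) → [0,1]` is continuous and `(nA, nB)` solves
`n′(t) = G(n(t); f(t))` on `[0,∞)` with `nA(0) ≥ 0`, `nB(0) ≥ 0`,
`nA(0) + nB(0) ≤ 1`, then `nA(t) ≥ 0`, `nB(t) ≥ 0`, `nA(t) + nB(t) ≤ 1`
for all `t ≥ 0`. -/
theorem ng_simplex_forward_invariant (f nA nB : ℝ → ℝ)
    (hfc : ContinuousOn f (Set.Ici (0 : ℝ)))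
    (hf01 : ∀ t ∈ Set.Ici (0 : ℝ), f t ∈ Set.Icc (0 : ℝ) 1)
    (hode : ∀ t ∈ Set.Ici (0 : ℝ),
      HasDerivWithinAt (fun u => (nA u, nB u)) (NG_G (f t) (nA t) (nB t))
        (Set.Ici (0 : ℝ)) t)
    (hA0 : 0 ≤ nA 0) (hB0 : 0 ≤ nB 0) (hsum0 : nA 0 + nB 0 ≤ 1) :
    ∀ t ∈ Set.Ici (0 : ℝ), 0 ≤ nA t ∧ 0 ≤ nB t ∧ nA t + nB t ≤ 1 := by
  have hdA : ∀ t ∈ Set.Ici (0 : ℝ),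
      HasDerivWithinAt nA (f t - nA t - f t * nB t) (Set.Ici 0) t := by
    intro t ht
    have h := (hode t ht).hasFDerivWithinAt.fst.hasDerivWithinAt
    simpa [NG_G] using h
  have hdB : ∀ t ∈ Set.Ici (0 : ℝ),
      HasDerivWithinAt nB ((1 - f t) - (1 - f t) * nA t - nB t) (Set.Ici 0) t := by
    intro t ht
    have h := (hode t ht).hasFDerivWithinAt.snd.hasDerivWithinAt
    simpa [NG_G] using h
  set g : ℝ → ℝ := fun t => max (max (-nA t) (-nB t)) (nA t + nB t - 1) with hgdef
  have hcontA : ContinuousOn nA (Set.Ici 0) := fun t ht => (hdA t ht).continuousWithinAt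
  have hcontB : ContinuousOn nB (Set.Ici 0) := fun t ht => (hdB t ht).continuousWithinAt
  have hcontg : ContinuousOn g (Set.Ici 0) := fun t ht =>
    (((hcontA t ht).neg.max (hcontB t ht).neg).max
      (((hcontA t ht).add (hcontB t ht)).sub continuousWithinAt_const))
  -- key liminf-slope bound for g
  have key : ∀ x ∈ Set.Ici (0 : ℝ), ∀ r, 2 * |g x| < r →
      ∀ᶠ z in nhdsWithin x (Set.Ioi x), slope g x z < r := by
    intro x hx r hr
    have hIoi : Set.Ioi x ⊆ Set.Ici (0 : ℝ) := fun z hz => Set.mem_Ici.2 (le_of_lt (lt_of_le_of_lt (Set.mem_Ici.1 hx) (Set.mem_Ioi.1 hz)))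
    have hxabs : (0 : ℝ) ≤ |g x| := abs_nonneg _
    have hrpos : (0 : ℝ) < r := by linarith
    have hF0 : 0 ≤ f x := (hf01 x hx).1
    have hF1 : f x ≤ 1 := (hf01 x hx).2
    set v := g x with hv
    have hm1 : -nA x ≤ v := le_trans (le_max_left _ _) (le_max_left _ _)
    have hm2 : -nB x ≤ v := le_trans (le_max_right _ _) (le_max_left _ _)
    have hm3 : nA x + nB x - 1 ≤ v := le_max_right _ _
    have habs1 : v ≤ |v| := le_abs_self v
    have habs2 : -|v| ≤ v := neg_abs_le v
    -- a generic helper: for a function h with value h x and constraints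
    -- either active with deriv < r or strictly below v
    have hxIoi : x ∉ Set.Ioi x := fun h => lt_irrefl x h
    -- component A
    have hEA : ∀ᶠ z in nhdsWithin x (Set.Ioi x), -nA z - v < r * (z - x) := by
      rcases eq_or_lt_of_le hm1 with hact | hlt
      · -- active: derivative bound
        have hder : HasDerivWithinAt (fun z => -nA z)
            (-(f x - nA x - f x * nB x)) (Set.Ioi x) x :=
          ((hdA x hx).mono hIoi).neg
        have hdlt : -(f x - nA x - f x * nB x) < r := by
          have p1 : 0 ≤ f x * (1 - nA x - nB x + v) :=
            mul_nonneg hF0 (by linarith)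
          have p2 : 0 ≤ (1 - f x) * (|v| + v) :=
            mul_nonneg (by linarith) (by linarith)
          have p3 : 0 ≤ f x * (|v| - v) := mul_nonneg hF0 (by linarith)
          nlinarith [hact]
        have hT := (hasDerivWithinAt_iff_tendsto_slope' hxIoi).1 hder
        have hev := hT.eventually_lt_const hdlt
        filter_upwards [hev, self_mem_nhdsWithin] with z hz hzx
        have hzx' : 0 < z - x := sub_pos.2 hzx
        have : slope (fun z => -nA z) x z < r := hz
        rw [slope_def_field] at this
        have := (div_lt_iff₀ hzx').1 (by
          simpa [div_eq_inv_mul, slope, vsub_eq_sub] using this)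
        -- this : -nA z - -nA x < r * (z - x)
        calc -nA z - v = -nA z - (-nA x) := by rw [← hact]
        _ < r * (z - x) := by linarith
      · -- inactive: continuity
        have hcont : Filter.Tendsto nA (nhdsWithin x (Set.Ioi x)) (nhds (nA x)) :=
          (hcontA x hx).mono_left (nhdsWithin_mono x hIoi)
        have hev : ∀ᶠ z in nhdsWithin x (Set.Ioi x), -nA z - v < 0 := by
          have := hcont.eventually_const_lt (by linarith : -v < nA x)
          filter_upwards [this] with z hz; linarith
        filter_upwards [hev, self_mem_nhdsWithin] with z hz hzx
        have : 0 < r * (z - x) := mul_pos hrpos (sub_pos.2 hzx)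
        linarith
    -- component B
    have hEB : ∀ᶠ z in nhdsWithin x (Set.Ioi x), -nB z - v < r * (z - x) := by
      rcases eq_or_lt_of_le hm2 with hact | hlt
      · have hder : HasDerivWithinAt (fun z => -nB z)
            (-((1 - f x) - (1 - f x) * nA x - nB x)) (Set.Ioi x) x :=
          ((hdB x hx).mono hIoi).neg
        have hdlt : -((1 - f x) - (1 - f x) * nA x - nB x) < r := by
          have p1 : 0 ≤ (1 - f x) * (1 - nA x - nB x + v) :=
            mul_nonneg (by linarith) (by linarith)
          have p2 : 0 ≤ f x * (|v| + v) := mul_nonneg hF0 (by linarith)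
          have p3 : 0 ≤ (1 - f x) * (|v| - v) := mul_nonneg (by linarith) (by linarith)
          nlinarith [hact]
        have hT := (hasDerivWithinAt_iff_tendsto_slope' hxIoi).1 hder
        have hev := hT.eventually_lt_const hdlt
        filter_upwards [hev, self_mem_nhdsWithin] with z hz hzx
        have hzx' : 0 < z - x := sub_pos.2 hzx
        have : slope (fun z => -nB z) x z < r := hz
        rw [slope_def_field] at this
        have := (div_lt_iff₀ hzx').1 (by
          simpa [div_eq_inv_mul, slope, vsub_eq_sub] using this)
        calc -nB z - v = -nB z - (-nB x) := by rw [← hact]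
        _ < r * (z - x) := by linarith
      · have hcont : Filter.Tendsto nB (nhdsWithin x (Set.Ioi x)) (nhds (nB x)) :=
          (hcontB x hx).mono_left (nhdsWithin_mono x hIoi)
        have hev : ∀ᶠ z in nhdsWithin x (Set.Ioi x), -nB z - v < 0 := by
          have := hcont.eventually_const_lt (by linarith : -v < nB x)
          filter_upwards [this] with z hz; linarith
        filter_upwards [hev, self_mem_nhdsWithin] with z hz hzx
        have : 0 < r * (z - x) := mul_pos hrpos (sub_pos.2 hzx)
        linarith
    -- sum component
    have hES : ∀ᶠ z in nhdsWithin x (Set.Ioi x), nA z + nB z - 1 - v < r * (z - x) := by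
      rcases eq_or_lt_of_le hm3 with hact | hlt
      · have hder : HasDerivWithinAt (fun z => nA z + nB z - 1)
            ((f x - nA x - f x * nB x) + ((1 - f x) - (1 - f x) * nA x - nB x))
            (Set.Ioi x) x := by
          exact (((hdA x hx).mono hIoi).add ((hdB x hx).mono hIoi)).sub_const 1
        have hdlt : (f x - nA x - f x * nB x) + ((1 - f x) - (1 - f x) * nA x - nB x) < r := by
          have p1 : 0 ≤ (1 - f x) * (nA x + v) := mul_nonneg (by linarith) (by linarith)
          have p2 : 0 ≤ f x * (nB x + v) := mul_nonneg hF0 (by linarith)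
          nlinarith [hact]
        have hT := (hasDerivWithinAt_iff_tendsto_slope' hxIoi).1 hder
        have hev := hT.eventually_lt_const hdlt
        filter_upwards [hev, self_mem_nhdsWithin] with z hz hzx
        have hzx' : 0 < z - x := sub_pos.2 hzx
        have : slope (fun z => nA z + nB z - 1) x z < r := hz
        rw [slope_def_field] at this
        have := (div_lt_iff₀ hzx').1 (by
          simpa [div_eq_inv_mul, slope, vsub_eq_sub] using this)
        calc nA z + nB z - 1 - v = (nA z + nB z - 1) - (nA x + nB x - 1) := by rw [← hact]
        _ < r * (z - x) := by linarith
      · have hcont : Filter.Tendsto (fun z => nA z + nB z)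
            (nhdsWithin x (Set.Ioi x)) (nhds (nA x + nB x)) :=
          (((hcontA x hx).add (hcontB x hx))).mono_left (nhdsWithin_mono x hIoi)
        have hev : ∀ᶠ z in nhdsWithin x (Set.Ioi x), nA z + nB z - 1 - v < 0 := by
          have := hcont.eventually_lt_const (by linarith : nA x + nB x < v + 1)
          filter_upwards [this] with z hz; linarith
        filter_upwards [hev, self_mem_nhdsWithin] with z hz hzx
        have : 0 < r * (z - x) := mul_pos hrpos (sub_pos.2 hzx)
        linarith
    -- combine
    filter_upwards [hEA, hEB, hES, self_mem_nhdsWithin] with z h1 h2 h3 hzx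
    have hzx' : 0 < z - x := sub_pos.2 hzx
    have hgz : g z - g x < r * (z - x) := by
      have : g z ≤ max (max (-nA z) (-nB z)) (nA z + nB z - 1) := le_of_eq rfl
      have hmax : g z < v + r * (z - x) := by
        apply max_lt (max_lt _ _) _
        · linarith
        · linarith
        · linarith
      linarith [hmax]
    rw [slope_def_field]
    rw [div_lt_iff₀ hzx']
    simpa [div_eq_inv_mul] using hgz
  -- conclusion via barrier lemma
  intro t ht
  have hg0 : g 0 ≤ 0 := by
    apply max_le (max_le (by linarith) (by linarith)) (by linarith)
  have hmain : ∀ ε : ℝ, 0 < ε → g t ≤ ε * Real.exp (3 * t) := by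
    intro ε hε
    have hbarrier : ∀ ⦃x⦄, x ∈ Set.Icc (0 : ℝ) t →
        g x ≤ ε * Real.exp (3 * x) := by
      apply image_le_of_liminf_slope_right_lt_deriv_boundary'
        (f := g) (f' := fun x => 2 * |g x|)
        (B := fun x => ε * Real.exp (3 * x)) (B' := fun x => 3 * (ε * Real.exp (3 * x)))
      · exact hcontg.mono (Set.Icc_subset_Ici_self)
      · intro x hx r hr
        exact ((key x hx.1 r hr).frequently)
      · have : (0:ℝ) < ε * Real.exp (3 * 0) := by positivity
        linarith
      · exact ((continuous_const.mul (Real.continuous_exp.comp (continuous_const.mul continuous_id))).continuousOn)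
      · intro x hx
        have h1 : HasDerivAt (fun y : ℝ => 3 * y) 3 x := by
          simpa using (hasDerivAt_id x).const_mul (3 : ℝ)
        have h2 : HasDerivAt (fun y : ℝ => Real.exp (3 * y)) (Real.exp (3 * x) * 3) x :=
          (Real.hasDerivAt_exp (3 * x)).comp x h1
        have h3 : HasDerivAt (fun y : ℝ => ε * Real.exp (3 * y))
            (ε * (Real.exp (3 * x) * 3)) x := h2.const_mul ε
        have h4 : HasDerivAt (fun y : ℝ => ε * Real.exp (3 * y))
            (3 * (ε * Real.exp (3 * x))) x := by
          convert h3 using 1; ring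
        exact h4.hasDerivWithinAt
      · intro x hx heq
        have hpos : 0 < ε * Real.exp (3 * x) := by positivity
        rw [heq, abs_of_pos hpos]
        linarith
    exact hbarrier (Set.right_mem_Icc.2 ht)
  have hgt : g t ≤ 0 := by
    by_contra hgt
    push_neg at hgt
    have hexp : 0 < Real.exp (3 * t) := Real.exp_pos _
    have hε : 0 < g t / (2 * Real.exp (3 * t)) := by positivity
    have h := hmain _ hε
    have : g t / (2 * Real.exp (3 * t)) * Real.exp (3 * t) = g t / 2 := by
      field_simp
    rw [this] at h
    linarith
  have h1 : -nA t ≤ 0 := le_trans (le_trans (le_max_left _ _) (le_max_left _ _)) hgt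
  have h2 : -nB t ≤ 0 := le_trans (le_trans (le_max_right _ _) (le_max_left _ _)) hgt
  have h3 : nA t + nB t - 1 ≤ 0 := le_trans (le_max_right _ _) hgt
  exact ⟨by linarith, by linarith, by linarith⟩
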